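/- There exist constants c, C > 0 such that for every n ≥ 3, the modified subgraph expectation threshold of the cycle C_n on n vertices (viewed as a subgraph of K_n) satisfies c/n ≤ p̃_E(C_n) ≤ C/n. -/

import Mathlib

set_option maxHeartbeats 1000000


open Finset

attribute [local instance] Classical.propDecidable

/-- The edge set of the complete graph `K_n` on vertex set `Fin n`. -/
def Kn (n : ℕ) : Finset (Sym2 (Fin n)) :=
  Finset.univ.filter (fun e => ¬ e.IsDiag)

/-- Two edge sets on `Fin n` are isomorphic (as edge-induced graphs) if some
permutation of the vertices maps one edge set onto the other. -/
def IsCopy (n : ℕ) (A B : Finset (Sym2 (Fin n))) : Prop :=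
  ∃ σ : Equiv.Perm (Fin n), A.image (Sym2.map σ) = B

/-- `copyCount n H' H` is `M_{H',H}`, the number of edge-induced subgraphs of `H`
that are isomorphic copies of `H'`. -/
noncomputable def copyCount (n : ℕ) (H' H : Finset (Sym2 (Fin n))) : ℕ :=
  (H.powerset.filter (fun S => IsCopy n H' S)).card

/-- The number of copies of `H` in `K_n` whose edge set contains `J0`. -/
noncomputable def copyCountContaining (n : ℕ) (H J0 : Finset (Sym2 (Fin n))) : ℕ :=
  ((Kn n).powerset.filter (fun S => IsCopy n H S ∧ J0 ⊆ S)).card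

/-- The probability that `G(n,p)` equals the graph with edge set `G ⊆ K_n`. -/
noncomputable def erWeight (n : ℕ) (p : ℝ) (G : Finset (Sym2 (Fin n))) : ℝ :=
  p ^ G.card * (1 - p) ^ ((Kn n).card - G.card)

/-- `P_p(E)`: the probability that `G(n,p)` satisfies the event `E`. -/
noncomputable def erProb (n : ℕ) (p : ℝ) (E : Finset (Sym2 (Fin n)) → Prop) : ℝ :=
  ∑ G ∈ (Kn n).powerset, if E G then erWeight n p G else 0

/-- `E_p f`: the expectation of `f` under `G(n,p)`. -/
noncomputable def erExp (n : ℕ) (p : ℝ) (f : Finset (Sym2 (Fin n)) → ℝ) : ℝ :=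
  ∑ G ∈ (Kn n).powerset, erWeight n p G * f G

/-- The critical threshold `p_c(H)`. -/
noncomputable def pc (n : ℕ) (H : Finset (Sym2 (Fin n))) : ℝ :=
  sInf {p : ℝ | p ∈ Set.Icc (0:ℝ) 1 ∧
    1/2 ≤ erProb n p (fun G => 1 ≤ copyCount n H G)}

/-- The Kahn–Kalai subgraph expectation threshold `p_E(H)`. -/
noncomputable def pE (n : ℕ) (H : Finset (Sym2 (Fin n))) : ℝ :=
  sInf {p : ℝ | p ∈ Set.Icc (0:ℝ) 1 ∧
    ∀ H' ⊆ H, H'.Nonempty →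
      1/2 ≤ erExp n p (fun G => (copyCount n H' G : ℝ))}

/-- The modified subgraph expectation threshold `p̃_E(H)`. -/
noncomputable def ptE (n : ℕ) (H : Finset (Sym2 (Fin n))) : ℝ :=
  sInf {p : ℝ | p ∈ Set.Icc (0:ℝ) 1 ∧
    ∀ H' ⊆ H, H'.Nonempty →
      (copyCount n H' H : ℝ) / 2 ≤ erExp n p (fun G => (copyCount n H' G : ℝ))}

/-- The Hamiltonian cycle on the `n` vertices of `K_n`, as an edge set. -/
def cycleEdges (n : ℕ) : Finset (Sym2 (Fin n)) :=
  Finset.univ.image (fun i => s(i, finRotate n i))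

/-- `m^m ≤ 3^m * m!` -/
lemma pow_self_le_three_pow_mul_factorial (m : ℕ) : m ^ m ≤ 3 ^ m * m.factorial := by
  have hterm : ((m:ℝ)) ^ m / m.factorial ≤ Real.exp m := by
    refine le_trans ?_ (Real.sum_le_exp_of_nonneg (x := (m:ℝ)) (by positivity) (m+1))
    have := Finset.single_le_sum (f := fun i : ℕ => (m:ℝ) ^ i / i.factorial)
      (fun i _ => by positivity) (show m ∈ Finset.range (m+1) by simp)
    simpa using this
  have h3 : Real.exp m ≤ 3 ^ m := by
    rw [← Real.exp_one_pow]
    exact pow_le_pow_left₀ (Real.exp_pos 1).le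
      (le_trans Real.exp_one_lt_d9.le (by norm_num)) m
  have hfac : (0:ℝ) < m.factorial := by positivity
  have : ((m:ℝ)) ^ m ≤ 3 ^ m * m.factorial := by
    rw [div_le_iff₀ hfac] at hterm
    calc ((m:ℝ))^m ≤ Real.exp m * m.factorial := hterm
    _ ≤ 3 ^ m * m.factorial := by
        exact mul_le_mul_of_nonneg_right h3 hfac.le
  exact_mod_cast this

/-- `n^m ≤ m^m * (n choose m)` for `m ≤ n`. -/
lemma pow_le_pow_mul_choose : ∀ m n : ℕ, m ≤ n → n ^ m ≤ m ^ m * n.choose m := by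
  intro m
  induction m with
  | zero => intro n _; simp
  | succ m ih =>
    intro n hmn
    obtain ⟨n', rfl⟩ : ∃ n', n = n' + 1 := ⟨n - 1, by omega⟩
    have hmn' : m ≤ n' := by omega
    have key : (n' + 1).choose (m+1) * (m+1) = (n'+1) * n'.choose m :=
      (Nat.add_one_mul_choose_eq n' m).symm
    have ih' := ih n' hmn'
    -- want : (n'+1)^(m+1) ≤ (m+1)^(m+1) * choose (n'+1) (m+1)
    -- multiply by (m+1):
    have h1 : (n'+1)^(m+1) * (m+1) ≤ (m+1)^(m+1) * ((n'+1).choose (m+1)) * (m+1) → 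
        (n'+1)^(m+1) ≤ (m+1)^(m+1) * ((n'+1).choose (m+1)) := by
      intro h
      exact Nat.le_of_mul_le_mul_right h (by omega)
    apply h1
    have h2 : (m+1)^(m+1) * ((n'+1).choose (m+1)) * (m+1) 
        = (m+1)^(m+1) * ((n'+1) * n'.choose m) := by
      rw [mul_assoc, key]
    rw [h2]
    -- goal : (n'+1)^(m+1) * (m+1) ≤ (m+1)^(m+1) * ((n'+1) * n'.choose m)
    -- suffices (n'+1)^m * (m+1) ≤ (m+1)^(m+1) * n'.choose m  then mult by (n'+1)
    have h3 : (n'+1)^m * (m+1) ≤ (m+1)^(m+1) * n'.choose m := by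
      -- key cross bound: m*(n'+1) ≤ (m+1)*n' needs n' ≥ m ✓
      rcases Nat.eq_zero_or_pos m with hm0 | hmpos
      · subst hm0; simp [Nat.choose]
      · -- (m*(n'+1))^m ≤ ((m+1)*n')^m
        have hcross : (m*(n'+1))^m ≤ ((m+1)*n')^m := by
          apply Nat.pow_le_pow_left; nlinarith
        -- m^m * (n'+1)^m ≤ (m+1)^m * n'^m ≤ (m+1)^m * (m^m * choose n' m)
        have h4 : m^m * (n'+1)^m ≤ (m+1)^m * (m^m * n'.choose m) := by
          calc m^m * (n'+1)^m = (m*(n'+1))^m := (mul_pow _ _ _).symm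
          _ ≤ ((m+1)*n')^m := hcross
          _ = (m+1)^m * n'^m := mul_pow _ _ _
          _ ≤ (m+1)^m * (m^m * n'.choose m) := Nat.mul_le_mul_left _ ih'
        have h5 : (n'+1)^m ≤ (m+1)^m * n'.choose m := by
          have := h4
          rw [show (m+1)^m * (m^m * n'.choose m) = m^m * ((m+1)^m * n'.choose m) by ring] at this
          exact Nat.le_of_mul_le_mul_left this (Nat.pow_pos hmpos)
        calc (n'+1)^m * (m+1) ≤ ((m+1)^m * n'.choose m) * (m+1) := 
              Nat.mul_le_mul_right _ h5
        _ = (m+1)^(m+1) * n'.choose m := by ring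
    calc (n'+1)^(m+1) * (m+1) = (n'+1) * ((n'+1)^m * (m+1)) := by ring
    _ ≤ (n'+1) * ((m+1)^(m+1) * n'.choose m) := Nat.mul_le_mul_left _ h3
    _ = (m+1)^(m+1) * ((n'+1) * n'.choose m) := by ring

/-- the main numeric inequality, non-full-cycle case -/
lemma key_count (n k t : ℕ) (htk : t ≤ k) (hm : k + t ≤ n) :
    2^k * n^t * (n - (k+t)).factorial * n^k ≤ 2 * 162^k * n.factorial := by
  set m := k + t with hmdef
  have hfact : n.choose m * m.factorial * (n-m).factorial = n.factorial :=
    Nat.choose_mul_factorial_mul_factorial hm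
  have h1 : n ^ m ≤ m ^ m * n.choose m := pow_le_pow_mul_choose m n hm
  have h2 : m ^ m ≤ 3 ^ m * m.factorial := pow_self_le_three_pow_mul_factorial m
  have h3 : 2^k * n^m ≤ 162^k * (n.choose m * m.factorial) := by
    calc 2^k * n^m ≤ 2^k * (m^m * n.choose m) := Nat.mul_le_mul_left _ h1
    _ ≤ 2^k * ((3^m * m.factorial) * n.choose m) := by
        exact Nat.mul_le_mul_left _ (Nat.mul_le_mul_right _ h2)
    _ = 2^k * 3^m * (n.choose m * m.factorial) := by ring
    _ ≤ 2^k * 3^(2*k) * (n.choose m * m.factorial) := by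
        have : (3:ℕ)^m ≤ 3^(2*k) := Nat.pow_le_pow_right (by norm_num) (by omega)
        exact Nat.mul_le_mul_right _ (Nat.mul_le_mul_left _ this)
    _ = 18^k * (n.choose m * m.factorial) := by
        rw [pow_mul, ← Nat.mul_pow]; norm_num
    _ ≤ 162^k * (n.choose m * m.factorial) := by
        exact Nat.mul_le_mul_right _ (Nat.pow_le_pow_left (by norm_num) k)
  calc 2^k * n^t * (n - m).factorial * n^k 
      = (2^k * n^m) * (n-m).factorial := by rw [hmdef]; ring
  _ ≤ (162^k * (n.choose m * m.factorial)) * (n-m).factorial := 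
      Nat.mul_le_mul_right _ h3
  _ = 162^k * n.factorial := by rw [← hfact]; ring
  _ ≤ 2 * 162^k * n.factorial := Nat.mul_le_mul_right _ (by omega)

/-- the main numeric inequality, full-cycle case -/
lemma key_count_univ (n : ℕ) : 2^n * n * n^n ≤ 2 * 162^n * n.factorial := by
  have h2 : n ^ n ≤ 3 ^ n * n.factorial := pow_self_le_three_pow_mul_factorial n
  have hn : n ≤ 2^n := (Nat.lt_two_pow_self).le
  calc 2^n * n * n^n ≤ 2^n * 2^n * (3^n * n.factorial) := by
        exact Nat.mul_le_mul (Nat.mul_le_mul_left _ hn) h2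
  _ = (2*2*3 : ℕ)^n * n.factorial := by 
        rw [Nat.mul_pow, Nat.mul_pow]; ring
  _ ≤ 162^n * n.factorial := Nat.mul_le_mul_right _ (Nat.pow_le_pow_left (by norm_num) n)
  _ ≤ 2 * 162^n * n.factorial := Nat.mul_le_mul_right _ (by omega)

section Part2
variable (n : ℕ)

lemma sym2_isDiag_map_iff {f : Fin n → Fin n} (hf : Function.Injective f)
    (e : Sym2 (Fin n)) : (Sym2.map f e).IsDiag ↔ e.IsDiag := by
  induction e using Sym2.ind with
  | _ x y => simp only [Sym2.map_pair_eq, Sym2.mk_isDiag_iff]; exact ⟨fun h => hf h, fun h => by rw [h]⟩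

lemma image_map_subset_Kn {H' : Finset (Sym2 (Fin n))} (h : H' ⊆ Kn n)
    (σ : Equiv.Perm (Fin n)) : H'.image (Sym2.map σ) ⊆ Kn n := by
  intro e he
  simp only [mem_image] at he
  obtain ⟨a, ha, rfl⟩ := he
  have := h ha
  simp only [Kn, mem_filter, mem_univ, true_and] at this ⊢
  rw [sym2_isDiag_map_iff n σ.injective]
  exact this

lemma sum_pow_weights (p : ℝ) (A : Finset (Sym2 (Fin n))) :
    ∑ U ∈ A.powerset, p ^ U.card * (1-p) ^ (A.card - U.card) = 1 := by
  have h := Finset.prod_add (fun _ => p) (fun _ => (1-p)) A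
  simp only [Finset.prod_const] at h
  have h2 : ∀ U ∈ A.powerset, p ^ U.card * (1-p) ^ ((A \ U).card)
      = p ^ U.card * (1-p) ^ (A.card - U.card) := by
    intro U hU
    rw [Finset.card_sdiff_of_subset (Finset.mem_powerset.mp hU)]
  rw [Finset.sum_congr rfl h2] at h
  rw [← h]
  norm_num

lemma sum_weight_filter_subset (p : ℝ) {S : Finset (Sym2 (Fin n))} (hS : S ⊆ Kn n) :
    ∑ G ∈ (Kn n).powerset.filter (fun G => S ⊆ G), erWeight n p G = p ^ S.card := by
  have key : ∑ G ∈ (Kn n).powerset.filter (fun G => S ⊆ G), erWeight n p G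
      = ∑ U ∈ ((Kn n) \ S).powerset, erWeight n p (S ∪ U) := by
    refine Finset.sum_bij' (fun G _ => G \ S) (fun U _ => S ∪ U) ?_ ?_ ?_ ?_ ?_
    · intro G hG
      simp only [mem_filter, Finset.mem_powerset] at hG ⊢
      exact Finset.sdiff_subset_sdiff hG.1 (le_refl S)
    · intro U hU
      simp only [mem_filter, Finset.mem_powerset] at hU ⊢
      constructor
      · exact Finset.union_subset hS (hU.trans (Finset.sdiff_subset))
      · exact Finset.subset_union_left
    · intro G hG
      simp only [mem_filter, Finset.mem_powerset] at hG
      show S ∪ (G \ S) = G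
      rw [Finset.union_comm, Finset.sdiff_union_of_subset hG.2]
    · intro U hU
      simp only [Finset.mem_powerset] at hU
      show (S ∪ U) \ S = U
      refine Finset.union_sdiff_cancel_left ?_
      exact Finset.disjoint_left.mpr (fun a haS haU => (Finset.mem_sdiff.mp (hU haU)).2 haS)
    · intro G hG
      simp only [mem_filter, Finset.mem_powerset] at hG
      show erWeight n p G = erWeight n p (S ∪ G \ S)
      rw [Finset.union_comm, Finset.sdiff_union_of_subset hG.2]
  rw [key]
  have hcard : ∀ U ∈ ((Kn n) \ S).powerset, erWeight n p (S ∪ U)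
      = p ^ S.card * (p ^ U.card * (1-p) ^ (((Kn n) \ S).card - U.card)) := by
    intro U hU
    rw [Finset.mem_powerset] at hU
    have hdisj : Disjoint S U := by
      have := hU.trans (Finset.sdiff_subset (s := Kn n) (t := S))
      exact Finset.disjoint_left.mpr (fun a haS haU =>
        ((Finset.mem_sdiff.mp (hU haU)).2 haS))
    have hcu : (S ∪ U).card = S.card + U.card := Finset.card_union_of_disjoint hdisj
    have hKS : ((Kn n) \ S).card = (Kn n).card - S.card := Finset.card_sdiff_of_subset hS
    have hexp : (Kn n).card - (S ∪ U).card = ((Kn n) \ S).card - U.card := by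
      rw [hcu, hKS]
      have h1 : S.card ≤ (Kn n).card := Finset.card_le_card hS
      have h2 : U.card ≤ ((Kn n) \ S).card := Finset.card_le_card hU
      rw [hKS] at h2
      omega
    unfold erWeight
    rw [hexp, hcu, pow_add]
    ring
  rw [Finset.sum_congr rfl hcard, ← Finset.mul_sum, sum_pow_weights, mul_one]

lemma copyCount_card_eq {H' S : Finset (Sym2 (Fin n))} (h : IsCopy n H' S) :
    S.card = H'.card := by
  obtain ⟨σ, rfl⟩ := h
  exact Finset.card_image_of_injective _ (Sym2.map.injective σ.injective)

lemma erExp_copyCount (p : ℝ) (H' : Finset (Sym2 (Fin n))) :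
    erExp n p (fun G => (copyCount n H' G : ℝ))
      = (copyCount n H' (Kn n) : ℝ) * p ^ H'.card := by
  unfold erExp copyCount
  have hG : ∀ G ∈ (Kn n).powerset,
      erWeight n p G * ((G.powerset.filter (fun S => IsCopy n H' S)).card : ℝ)
      = ∑ S ∈ (Kn n).powerset.filter (fun S => IsCopy n H' S),
          (if S ⊆ G then erWeight n p G else 0) := by
    intro G hGmem
    rw [Finset.mem_powerset] at hGmem
    have hset : G.powerset.filter (fun S => IsCopy n H' S)
        = ((Kn n).powerset.filter (fun S => IsCopy n H' S)).filter (fun S => S ⊆ G) := by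
      ext S
      simp only [mem_filter, Finset.mem_powerset]
      constructor
      · rintro ⟨h1, h2⟩; exact ⟨⟨h1.trans hGmem, h2⟩, h1⟩
      · rintro ⟨⟨_, h2⟩, h3⟩; exact ⟨h3, h2⟩
    rw [hset, Finset.card_filter]
    push_cast
    rw [Finset.mul_sum]
    refine Finset.sum_congr rfl (fun S _ => ?_)
    by_cases h : S ⊆ G <;> simp [h]
  rw [Finset.sum_congr rfl hG, Finset.sum_comm]
  have hS : ∀ S ∈ (Kn n).powerset.filter (fun S => IsCopy n H' S),
      (∑ G ∈ (Kn n).powerset, if S ⊆ G then erWeight n p G else 0) = p ^ H'.card := by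
    intro S hSmem
    simp only [mem_filter, Finset.mem_powerset] at hSmem
    rw [← Finset.sum_filter, sum_weight_filter_subset n p hSmem.1,
      copyCount_card_eq n hSmem.2]
  rw [Finset.sum_congr rfl hS, Finset.sum_const, nsmul_eq_mul]

lemma image_map_mul (σ τ : Equiv.Perm (Fin n)) (A : Finset (Sym2 (Fin n))) :
    A.image (Sym2.map (σ * τ)) = (A.image (Sym2.map τ)).image (Sym2.map σ) := by
  rw [Finset.image_image]
  congr 1
  funext e
  rw [Function.comp_apply, Sym2.map_map]
  rfl

lemma card_perm_filter_subset (H' X : Finset (Sym2 (Fin n))) (hX : X ⊆ Kn n) :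
    (univ.filter (fun σ : Equiv.Perm (Fin n) => H'.image (Sym2.map σ) ⊆ X)).card
      = copyCount n H' X
        * (univ.filter (fun σ : Equiv.Perm (Fin n) => H'.image (Sym2.map σ) = H')).card := by
  rw [Finset.card_eq_sum_card_fiberwise
    (f := fun σ : Equiv.Perm (Fin n) => H'.image (Sym2.map σ))
    (t := X.powerset.filter (fun S => IsCopy n H' S))
    (fun σ hσ => by
      simp only [mem_coe, mem_filter, mem_univ, true_and] at hσ
      simp only [mem_coe, mem_filter, Finset.mem_powerset]
      exact ⟨hσ, σ, rfl⟩)]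
  have hfib : ∀ S ∈ X.powerset.filter (fun S => IsCopy n H' S),
      (Finset.filter (fun σ : Equiv.Perm (Fin n) => H'.image (Sym2.map ⇑σ) = S)
        (Finset.filter (fun σ : Equiv.Perm (Fin n) => H'.image (Sym2.map ⇑σ) ⊆ X) univ)).card
      = (univ.filter (fun σ : Equiv.Perm (Fin n) => H'.image (Sym2.map σ) = H')).card := by
    intro S hSmem
    simp only [mem_filter, Finset.mem_powerset] at hSmem
    obtain ⟨hSX, σ₀, hσ₀⟩ := hSmem
    have hfil : Finset.filter (fun σ : Equiv.Perm (Fin n) => H'.image (Sym2.map ⇑σ) = S)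
          (Finset.filter (fun σ : Equiv.Perm (Fin n) => H'.image (Sym2.map ⇑σ) ⊆ X) univ)
        = univ.filter (fun σ : Equiv.Perm (Fin n) => H'.image (Sym2.map σ) = S) := by
      ext σ
      simp only [mem_filter, mem_univ, true_and]
      exact ⟨fun h => h.2, fun h => ⟨h ▸ hSX, h⟩⟩
    rw [hfil]
    refine Finset.card_bij (fun τ _ => σ₀⁻¹ * τ) ?_ ?_ ?_
    · intro τ hτ
      simp only [mem_filter, mem_univ, true_and] at hτ ⊢
      rw [image_map_mul, hτ, ← hσ₀, ← image_map_mul]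
      simp [Sym2.map_id]
    · intro τ hτ τ' hτ' h
      exact mul_left_cancel h
    · intro τ' hτ'
      simp only [mem_filter, mem_univ, true_and] at hτ'
      refine ⟨σ₀ * τ', ?_, by group⟩
      simp only [mem_filter, mem_univ, true_and]
      rw [image_map_mul, hτ', hσ₀]
  rw [Finset.sum_congr rfl hfib, Finset.sum_const, smul_eq_mul]
  rfl
end Part2

section Part3
variable (N : ℕ)

lemma cycleEdges_succ (m : ℕ) :
    cycleEdges (m+1) = univ.image (fun i : Fin (m+1) => s(i, i+1)) := by
  unfold cycleEdges
  congr 1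
  funext i
  rw [finRotate_succ_apply]

lemma cycleE_inj : Function.Injective (fun i : Fin (N+3) => s(i, i+1)) := by
  intro a b hab
  simp only [Sym2.eq, Sym2.rel_iff', Prod.mk.injEq, Prod.swap_prod_mk] at hab
  rcases hab with ⟨h1, _⟩ | ⟨h1, h2⟩
  · exact h1
  · exfalso
    rw [← h2] at h1
    have h1' : a + 0 = a + (1 + 1) := by rw [add_zero, ← add_assoc]; exact h1
    have h3 : (0 : Fin (N+3)) = 1 + 1 := add_left_cancel h1'
    have h4 : ((1 : Fin (N+3)) + 1).val = 2 := by
      rw [Fin.val_add, Fin.val_one]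
      exact Nat.mod_eq_of_lt (by omega)
    rw [← h3, Fin.val_zero] at h4
    omega

lemma mem_cycleEdges_iff (x y : Fin (N+3)) :
    s(x,y) ∈ cycleEdges (N+3) ↔ (y = x + 1 ∨ x = y + 1) := by
  rw [cycleEdges_succ (N+2)]
  simp only [mem_image, mem_univ, true_and]
  constructor
  · rintro ⟨a, ha⟩
    simp only [Sym2.eq, Sym2.rel_iff', Prod.mk.injEq, Prod.swap_prod_mk] at ha
    rcases ha with ⟨rfl, rfl⟩ | ⟨h1, h2⟩
    · left; rfl
    · right; rw [← h1, ← h2]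
  · rintro (rfl | rfl)
    · exact ⟨x, rfl⟩
    · exact ⟨y, Sym2.eq_swap⟩

open Fin.NatCast in
lemma good_card_bound (H' : Finset (Sym2 (Fin (N+3))))
    (hsub : H' ⊆ cycleEdges (N+3)) (hne : H'.Nonempty) :
    (univ.filter (fun σ : Equiv.Perm (Fin (N+3)) =>
        H'.image (Sym2.map ⇑σ) ⊆ cycleEdges (N+3))).card * (N+3) ^ H'.card
      ≤ 2 * 162 ^ H'.card * (N+3).factorial := by
  classical
  set E : Fin (N+3) → Sym2 (Fin (N+3)) := fun i => s(i, i+1) with hE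
  set good : Finset (Equiv.Perm (Fin (N+3))) := univ.filter (fun σ =>
      H'.image (Sym2.map ⇑σ) ⊆ cycleEdges (N+3)) with hgood
  set T : Finset (Fin (N+3)) := univ.filter (fun i => E i ∈ H') with hT
  have hHT : H' = T.image E := by
    ext e
    simp only [hT, mem_image, mem_filter, mem_univ, true_and]
    constructor
    · intro he
      have := hsub he
      rw [cycleEdges_succ (N+2)] at this
      simp only [mem_image, mem_univ, true_and] at this
      obtain ⟨a, ha⟩ := this
      exact ⟨a, by rw [hE]; simp only; rw [ha]; exact he, ha⟩
    · rintro ⟨a, ha, rfl⟩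
      exact ha
  have hk : T.card = H'.card := by
    conv_rhs => rw [hHT]
    exact (Finset.card_image_of_injective T (cycleE_inj N)).symm
  have hTne : T.Nonempty := by
    obtain ⟨e, he⟩ := hne
    rw [hHT] at he
    obtain ⟨a, ha, _⟩ := mem_image.mp he
    exact ⟨a, ha⟩
  -- the basic relation for good permutations
  have hgood_rel : ∀ σ ∈ good, ∀ i ∈ T,
      σ (i+1) = σ i + 1 ∨ σ i = σ (i+1) + 1 := by
    intro σ hσ i hi
    rw [hgood, mem_filter] at hσ
    rw [hT, mem_filter] at hi
    have hmem : Sym2.map ⇑σ (E i) ∈ cycleEdges (N+3) :=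
      hσ.2 (mem_image_of_mem _ hi.2)
    rw [hE] at hmem
    simp only [Sym2.map_pair_eq] at hmem
    exact (mem_cycleEdges_iff N (σ i) (σ (i+1))).mp hmem
  set eps : Equiv.Perm (Fin (N+3)) → Fin (N+3) → Bool :=
    fun σ i => if σ (i+1) = σ i + 1 then true else false with heps
  have hstep : ∀ σ ∈ good, ∀ i ∈ T,
      σ (i+1) = (if eps σ i then σ i + 1 else σ i - 1) := by
    intro σ hσ i hi
    rw [heps]
    simp only
    by_cases h : σ (i+1) = σ i + 1
    · simp [h]
    · simp only [if_neg h, Bool.false_eq_true, if_false]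
      rcases hgood_rel σ hσ i hi with h1 | h2
      · exact absurd h1 h
      · exact eq_sub_of_add_eq h2.symm
  by_cases hTuniv : T = univ
  · -- full cycle case
    have hkn : H'.card = N+3 := by
      rw [← hk, hTuniv, card_univ, Fintype.card_fin]
    have hinj : Set.InjOn (fun σ : Equiv.Perm (Fin (N+3)) =>
        ((fun i => eps σ i, σ 0) : (Fin (N+3) → Bool) × Fin (N+3))) good := by
      intro σ hσ σ' hσ' hΦ
      simp only [Prod.mk.injEq] at hΦ
      have hall : ∀ l : ℕ, σ ((l : Fin (N+3))) = σ' ((l : Fin (N+3))) := by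
        intro l
        induction l with
        | zero => simpa using hΦ.2
        | succ l ih =>
          have hc : ((l+1 : ℕ) : Fin (N+3)) = ((l : ℕ) : Fin (N+3)) + 1 := by push_cast; ring
          rw [hc]
          have hmemT : ((l : ℕ) : Fin (N+3)) ∈ T := by rw [hTuniv]; exact mem_univ _
          rw [hstep σ hσ _ hmemT, hstep σ' hσ' _ hmemT, ih,
            congrFun hΦ.1 ((l : ℕ) : Fin (N+3))]
      refine Equiv.ext (fun j => ?_)
      have := hall j.val
      rwa [Fin.cast_val_eq_self] at this
    have hcard : good.card ≤ 2^(N+3) * (N+3) := by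
      have h1 : good.card ≤ Fintype.card ((Fin (N+3) → Bool) × Fin (N+3)) := by
        have h2 := Finset.card_le_card_of_injOn (f := fun σ : Equiv.Perm (Fin (N+3)) =>
          ((fun i => eps σ i, σ 0) : (Fin (N+3) → Bool) × Fin (N+3)))
          (t := Finset.univ) (fun a _ => mem_univ _) hinj
        simpa using h2
      rwa [Fintype.card_prod, Fintype.card_fun, Fintype.card_bool, Fintype.card_fin] at h1
    rw [hkn]
    calc good.card * (N+3)^(N+3) ≤ (2^(N+3) * (N+3)) * (N+3)^(N+3) :=
        Nat.mul_le_mul_right _ hcard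
    _ ≤ 2 * 162^(N+3) * (N+3).factorial := key_count_univ (N+3)
  · -- proper subgraph case
    have haddinj : Function.Injective (fun i : Fin (N+3) => i + 1) := add_left_injective 1
    set B := T.image (fun i => i + 1) with hB
    set S := T.filter (fun i => i - 1 ∉ T) with hS
    have hSB : S = T \ B := by
      ext i
      simp only [hS, hB, mem_filter, mem_sdiff, mem_image]
      constructor
      · rintro ⟨hiT, h⟩
        refine ⟨hiT, ?_⟩
        rintro ⟨j, hj, rfl⟩
        exact h (by simpa using hj)
      · rintro ⟨hiT, h⟩
        refine ⟨hiT, fun hcon => h ⟨i - 1, hcon, by rw [sub_add_cancel]⟩⟩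
    have hBcard : B.card = T.card := card_image_of_injective T haddinj
    set V := T ∪ B with hV
    have hVcard : V.card = T.card + S.card := by
      have h1 : V.card + (T ∩ B).card = T.card + B.card := card_union_add_card_inter T B
      have h2 : (T \ B).card + (T ∩ B).card = T.card := card_sdiff_add_card_inter T B
      rw [hSB]
      omega
    have hVle : V.card ≤ N + 3 := by
      have := card_le_card (subset_univ V)
      simpa using this
    have hSsubT : S ⊆ T := by rw [hS]; exact filter_subset _ _
    have hSne : S.Nonempty := by
      rcases S.eq_empty_or_nonempty with h | h
      · exfalso
        have hstepdown : ∀ i ∈ T, i - 1 ∈ T := by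
          intro i hi
          by_contra hcon
          have : i ∈ S := by rw [hS]; exact mem_filter.mpr ⟨hi, hcon⟩
          rw [h] at this
          exact absurd this (notMem_empty i)
        obtain ⟨i₀, hi₀⟩ := hTne
        have hall : ∀ l : ℕ, i₀ - (l : Fin (N+3)) ∈ T := by
          intro l
          induction l with
          | zero => simpa using hi₀
          | succ l ih =>
            have hc : i₀ - ((l+1 : ℕ) : Fin (N+3)) = (i₀ - ((l:ℕ) : Fin (N+3))) - 1 := by
              push_cast; rw [sub_sub]
            rw [hc]
            exact hstepdown _ ih
        apply hTuniv
        ext j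
        simp only [mem_univ, iff_true]
        have := hall ((i₀ - j).val)
        rwa [Fin.cast_val_eq_self, sub_sub_cancel] at this
      · exact h
    have hback : ∀ j ∈ V, j ∉ S → j - 1 ∈ T := by
      intro j hj hjS
      rw [hV, mem_union] at hj
      rcases hj with hjT | hjB
      · by_contra h'
        exact hjS (by rw [hS]; exact mem_filter.mpr ⟨hjT, h'⟩)
      · rw [hB, mem_image] at hjB
        obtain ⟨i, hiT, hie⟩ := hjB
        rw [← hie]
        simpa using hiT
    have hrecon : ∀ σ ∈ good, ∀ σ' ∈ good, (∀ i ∈ T, eps σ i = eps σ' i) →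
        (∀ i ∈ S, σ i = σ' i) → ∀ j ∈ V, σ j = σ' j := by
      intro σ hσ σ' hσ' hepsa hSa
      have key : ∀ l : ℕ, ∀ j ∈ V, j - ((l:ℕ) : Fin (N+3)) ∈ S → σ j = σ' j := by
        intro l
        induction l with
        | zero =>
          intro j hj hjS
          rw [Nat.cast_zero, sub_zero] at hjS
          exact hSa j hjS
        | succ l ih =>
          intro j hj hjS
          by_cases hjS0 : j ∈ S
          · exact hSa j hjS0
          · have hjm1T : j - 1 ∈ T := hback j hj hjS0
            have hjm1V : j - 1 ∈ V := by rw [hV, mem_union]; exact Or.inl hjm1T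
            have hprev : σ (j-1) = σ' (j-1) := by
              apply ih (j-1) hjm1V
              have hc : j - ((l+1 : ℕ) : Fin (N+3)) = (j - 1) - ((l:ℕ) : Fin (N+3)) := by
                push_cast; rw [sub_sub, add_comm (1 : Fin (N+3))]
              rwa [hc] at hjS
            have hj1 : (j - 1) + 1 = j := sub_add_cancel j 1
            have e1 := hstep σ hσ (j-1) hjm1T
            have e2 := hstep σ' hσ' (j-1) hjm1T
            rw [hj1] at e1 e2
            rw [e1, e2, hprev, hepsa (j-1) hjm1T]
      intro j hj
      obtain ⟨s₀, hs₀⟩ := hSne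
      apply key ((j - s₀).val) j hj
      rw [Fin.cast_val_eq_self, sub_sub_cancel]
      exact hs₀
    -- fiberwise counting
    have hfiber : ∀ a : (↥T → Bool) × (↥S → Fin (N+3)),
        ((good).filter (fun σ => ((fun i : ↥T => eps σ i.1, fun i : ↥S => σ i.1) :
          (↥T → Bool) × (↥S → Fin (N+3))) = a)).card ≤ (N+3 - V.card).factorial := by
      intro a
      set F := (good).filter (fun σ => ((fun i : ↥T => eps σ i.1, fun i : ↥S => σ i.1) :
          (↥T → Bool) × (↥S → Fin (N+3))) = a) with hF
      rcases F.eq_empty_or_nonempty with he | ⟨σ₀, hσ₀⟩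
      · rw [he]; simp
      · have hmemF : ∀ σ ∈ F, σ ∈ good ∧ (∀ i ∈ T, eps σ i = eps σ₀ i) ∧
            (∀ i ∈ S, σ i = σ₀ i) := by
          intro σ hσf
          rw [hF, mem_filter] at hσf
          have hσ₀' := hσ₀
          rw [hF, mem_filter] at hσ₀'
          refine ⟨hσf.1, fun i hi => ?_, fun i hi => ?_⟩
          · have := congrFun (congrArg Prod.fst (hσf.2.trans hσ₀'.2.symm)) ⟨i, hi⟩
            simpa using this
          · have := congrFun (congrArg Prod.snd (hσf.2.trans hσ₀'.2.symm)) ⟨i, hi⟩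
            simpa using this
        have hσ₀good : σ₀ ∈ good := by
          have hσ₀' := hσ₀
          rw [hF, mem_filter] at hσ₀'
          exact hσ₀'.1
        have hagree : ∀ σ ∈ F, ∀ j ∈ V, σ j = σ₀ j := by
          intro σ hσf j hj
          obtain ⟨h1, h2, h3⟩ := hmemF σ hσf
          exact hrecon σ h1 σ₀ hσ₀good h2 h3 j hj
        set W := V.image (fun x => σ₀ x) with hW
        have hWcard : W.card = V.card := card_image_of_injective V (σ₀.injective)
        have hmapsto : ∀ σ ∈ F, ∀ x : Fin (N+3), x ∈ Vᶜ → σ x ∈ Wᶜ := by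
          intro σ hσf x hx
          rw [mem_compl] at hx ⊢
          intro hσx
          rw [hW, mem_image] at hσx
          obtain ⟨v, hv, hveq⟩ := hσx
          rw [← hagree σ hσf v hv] at hveq
          exact hx (by rwa [σ.injective hveq] at hv)
        have hcardle : F.card ≤ Fintype.card (↥(Vᶜ) ↪ ↥(Wᶜ)) := by
          rw [← Fintype.card_coe F]
          have hfok : ∀ σ : ↥F, ∀ x : ↥(Vᶜ), (σ.1 : Equiv.Perm (Fin (N+3))) x.1 ∈ Wᶜ :=
            fun σ x => hmapsto σ.1 σ.2 x.1 x.2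
          refine Fintype.card_le_of_injective
            (fun σ => ⟨fun x => ⟨σ.1 x.1, hfok σ x⟩,
              fun x y hxy => Subtype.ext (σ.1.injective (congrArg Subtype.val hxy))⟩) ?_
          intro σ σ' hee
          apply Subtype.ext
          apply Equiv.ext
          intro x
          by_cases hx : x ∈ V
          · rw [hagree σ.1 σ.2 x hx, hagree σ'.1 σ'.2 x hx]
          · have hxc : x ∈ Vᶜ := mem_compl.mpr hx
            have h5 := congrFun (congrArg (fun (g : ↥(Vᶜ) ↪ ↥(Wᶜ)) => (g : ↥(Vᶜ) → ↥(Wᶜ))) hee) ⟨x, hxc⟩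
            exact congrArg Subtype.val h5
        calc F.card ≤ Fintype.card (↥(Vᶜ) ↪ ↥(Wᶜ)) := hcardle
        _ = (Fintype.card ↥(Wᶜ)).descFactorial (Fintype.card ↥(Vᶜ)) := Fintype.card_embedding_eq
        _ = (N+3 - V.card).factorial := by
            rw [Fintype.card_coe, Fintype.card_coe, card_compl, card_compl, hWcard,
              Fintype.card_fin, Nat.descFactorial_self]
    have hgoodcard : good.card ≤ (2 ^ T.card * (N+3) ^ S.card) * (N+3 - V.card).factorial := by
      rw [Finset.card_eq_sum_card_fiberwise
        (f := fun σ : Equiv.Perm (Fin (N+3)) => ((fun i : ↥T => eps σ i.1, fun i : ↥S => σ i.1) :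
          (↥T → Bool) × (↥S → Fin (N+3))))
        (t := (univ : Finset ((↥T → Bool) × (↥S → Fin (N+3))))) (fun σ _ => mem_univ _)]
      calc (∑ a ∈ (univ : Finset ((↥T → Bool) × (↥S → Fin (N+3)))),
            ((good).filter (fun σ => ((fun i : ↥T => eps σ i.1, fun i : ↥S => σ i.1) :
              (↥T → Bool) × (↥S → Fin (N+3))) = a)).card)
          ≤ ∑ _a ∈ (univ : Finset ((↥T → Bool) × (↥S → Fin (N+3)))), (N+3 - V.card).factorial :=
            Finset.sum_le_sum (fun a _ => hfiber a)
      _ = (Fintype.card ((↥T → Bool) × (↥S → Fin (N+3)))) * (N+3 - V.card).factorial := by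
          rw [Finset.sum_const, smul_eq_mul, card_univ]
      _ = (2 ^ T.card * (N+3) ^ S.card) * (N+3 - V.card).factorial := by
          rw [Fintype.card_prod, Fintype.card_fun, Fintype.card_fun, Fintype.card_bool,
            Fintype.card_coe, Fintype.card_coe, Fintype.card_fin]
    have hkt : T.card + S.card ≤ N + 3 := by omega
    have hkey := key_count (N+3) T.card S.card (card_le_card hSsubT) hkt
    rw [← hk]
    calc good.card * (N+3) ^ T.card
        ≤ ((2 ^ T.card * (N+3) ^ S.card) * (N+3 - V.card).factorial) * (N+3) ^ T.card :=
          Nat.mul_le_mul_right _ hgoodcard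
    _ = 2 ^ T.card * (N+3) ^ S.card * (N+3 - (T.card + S.card)).factorial * (N+3) ^ T.card := by
        rw [hVcard]
    _ ≤ 2 * 162 ^ T.card * (N+3).factorial := hkey
end Part3

section Part4
variable (N : ℕ)

lemma cycleEdges_subset_Kn : cycleEdges (N+3) ⊆ Kn (N+3) := by
  intro e he
  rw [cycleEdges_succ (N+2)] at he
  obtain ⟨i, _, rfl⟩ := mem_image.mp he
  simp only [Kn, mem_filter, mem_univ, true_and, Sym2.mk_isDiag_iff]
  intro h
  have h2 := congrArg Fin.val (left_eq_add.mp h)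
  rw [Fin.val_one, Fin.val_zero] at h2
  omega

lemma cycleEdges_card : (cycleEdges (N+3)).card = N+3 := by
  rw [cycleEdges_succ (N+2), Finset.card_image_of_injective _ (cycleE_inj N),
    card_univ, Fintype.card_fin]

end Part4

/-- For the Hamiltonian cycle `C_n` on the `n` vertices of `K_n` (`n ≥ 3`), the
modified subgraph expectation threshold satisfies `p̃_E(C_n) ≍ 1/n`. -/
theorem ptE_cycle :
    ∃ c C : ℝ, 0 < c ∧ 0 < C ∧ ∀ n : ℕ, 3 ≤ n →
      c / n ≤ ptE n (cycleEdges n) ∧ ptE n (cycleEdges n) ≤ C / n := by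
  refine ⟨1/2, 162, by norm_num, by norm_num, ?_⟩
  intro n hn
  obtain ⟨N, rfl⟩ : ∃ N, n = N + 3 := ⟨n - 3, by omega⟩
  have hcycKn : cycleEdges (N+3) ⊆ Kn (N+3) := cycleEdges_subset_Kn N
  have hcyccard : (cycleEdges (N+3)).card = N+3 := cycleEdges_card N
  have hone : (1:ℝ) ∈ {p : ℝ | p ∈ Set.Icc (0:ℝ) 1 ∧
      ∀ H' ⊆ cycleEdges (N+3), H'.Nonempty →
        (copyCount (N+3) H' (cycleEdges (N+3)) : ℝ) / 2 ≤
          erExp (N+3) p (fun G => (copyCount (N+3) H' G : ℝ))} := by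
    refine ⟨⟨zero_le_one, le_refl 1⟩, ?_⟩
    intro H' hH' _
    rw [erExp_copyCount, one_pow, mul_one]
    have hMN : copyCount (N+3) H' (cycleEdges (N+3)) ≤ copyCount (N+3) H' (Kn (N+3)) :=
      card_le_card (filter_subset_filter _ (powerset_mono.mpr hcycKn))
    have hMN' : (copyCount (N+3) H' (cycleEdges (N+3)) : ℝ)
        ≤ (copyCount (N+3) H' (Kn (N+3)) : ℝ) := by exact_mod_cast hMN
    linarith
  have hbdd : BddBelow {p : ℝ | p ∈ Set.Icc (0:ℝ) 1 ∧
      ∀ H' ⊆ cycleEdges (N+3), H'.Nonempty →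
        (copyCount (N+3) H' (cycleEdges (N+3)) : ℝ) / 2 ≤
          erExp (N+3) p (fun G => (copyCount (N+3) H' G : ℝ))} :=
    ⟨0, fun p hp => hp.1.1⟩
  have hnonempty : Set.Nonempty {p : ℝ | p ∈ Set.Icc (0:ℝ) 1 ∧
      ∀ H' ⊆ cycleEdges (N+3), H'.Nonempty →
        (copyCount (N+3) H' (cycleEdges (N+3)) : ℝ) / 2 ≤
          erExp (N+3) p (fun G => (copyCount (N+3) H' G : ℝ))} := ⟨1, hone⟩
  have hx0 : (0:ℝ) < ((N+3:ℕ):ℝ) := by positivity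
  constructor
  · -- lower bound
    unfold ptE
    apply le_csInf hnonempty
    intro p hp
    have hp0 : 0 ≤ p := hp.1.1
    have hcycne : (cycleEdges (N+3)).Nonempty := by
      apply card_pos.mp
      rw [hcyccard]
      omega
    have hcond := hp.2 (cycleEdges (N+3)) (Finset.Subset.refl _) hcycne
    rw [erExp_copyCount, hcyccard] at hcond
    have hM0 : 1 ≤ copyCount (N+3) (cycleEdges (N+3)) (cycleEdges (N+3)) := by
      rw [copyCount]
      apply card_pos.mpr
      refine ⟨cycleEdges (N+3), mem_filter.mpr ⟨mem_powerset_self _, 1, ?_⟩⟩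
      simp [Sym2.map_id]
    have hN0 : copyCount (N+3) (cycleEdges (N+3)) (Kn (N+3)) ≤ (N+3).factorial := by
      rw [copyCount]
      have himg : (Kn (N+3)).powerset.filter (fun S => IsCopy (N+3) (cycleEdges (N+3)) S)
          ⊆ (univ : Finset (Equiv.Perm (Fin (N+3)))).image
              (fun σ : Equiv.Perm (Fin (N+3)) => (cycleEdges (N+3)).image (Sym2.map ⇑σ)) := by
        intro SS hSS
        obtain ⟨σ, hσ⟩ := (mem_filter.mp hSS).2
        exact mem_image.mpr ⟨σ, mem_univ σ, hσ⟩
      calc ((Kn (N+3)).powerset.filter (fun S => IsCopy (N+3) (cycleEdges (N+3)) S)).card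
          ≤ ((univ : Finset (Equiv.Perm (Fin (N+3)))).image
              (fun σ : Equiv.Perm (Fin (N+3)) => (cycleEdges (N+3)).image (Sym2.map ⇑σ))).card := card_le_card himg
      _ ≤ (univ : Finset (Equiv.Perm (Fin (N+3)))).card := card_image_le
      _ = (N+3).factorial := by rw [card_univ, Fintype.card_perm, Fintype.card_fin]
    by_contra hcon
    push_neg at hcon
    set x : ℝ := ((N+3:ℕ):ℝ) with hxdef
    have hc' : (1:ℝ)/2 / x = 1/(2*x) := div_div 1 2 x
    rw [hc'] at hcon
    have hA : ((N+3).factorial : ℝ) ≤ x^(N+3) := by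
      rw [hxdef]
      exact_mod_cast Nat.factorial_le_pow (N+3)
    have hApos : (0:ℝ) < ((N+3).factorial : ℝ) := by
      exact_mod_cast (N+3).factorial_pos
    have hhalf : (1:ℝ)/2 ≤ ((N+3).factorial : ℝ) * p^(N+3) := by
      have h1 : (1:ℝ)/2 ≤ (copyCount (N+3) (cycleEdges (N+3)) (cycleEdges (N+3)) : ℝ)/2 := by
        have : (1:ℝ) ≤ (copyCount (N+3) (cycleEdges (N+3)) (cycleEdges (N+3)) : ℝ) := by
          exact_mod_cast hM0
        linarith
      have h2 : (copyCount (N+3) (cycleEdges (N+3)) (Kn (N+3)) : ℝ) * p^(N+3)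
          ≤ ((N+3).factorial : ℝ) * p^(N+3) := by
        apply mul_le_mul_of_nonneg_right _ (pow_nonneg hp0 _)
        exact_mod_cast hN0
      linarith
    have hpow : p^(N+3) < (1/(2*x))^(N+3) :=
      pow_lt_pow_left₀ hcon hp0 (by omega)
    have hlt : ((N+3).factorial : ℝ) * p^(N+3) < ((N+3).factorial : ℝ) * (1/(2*x))^(N+3) :=
      mul_lt_mul_of_pos_left hpow hApos
    have hsmall : ((N+3).factorial : ℝ) * (1/(2*x))^(N+3) ≤ 1/2 := by
      rw [div_pow, one_pow, mul_pow, mul_one_div, div_le_iff₀ (by positivity)]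
      have h7 : (1:ℝ) ≤ 2^(N+2) := one_le_pow₀ (by norm_num)
      have h8 : x^(N+3) ≤ 2^(N+2) * x^(N+3) := by
        nlinarith [pow_nonneg hx0.le (N+3)]
      calc ((N+3).factorial : ℝ) ≤ x^(N+3) := hA
      _ ≤ 2^(N+2) * x^(N+3) := h8
      _ = 1/2 * (2^(N+3) * x^(N+3)) := by rw [pow_succ]; ring
    linarith
  · -- upper bound
    by_cases hbig : ((N+3:ℕ):ℝ) ≤ 162
    · unfold ptE
      have hle := csInf_le hbdd hone
      have h2 : (1:ℝ) ≤ 162 / ((N+3:ℕ):ℝ) := by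
        rw [le_div_iff₀ hx0]
        linarith
      linarith
    · push_neg at hbig
      set p₀ : ℝ := 162 / ((N+3:ℕ):ℝ) with hp₀
      have hp₀mem : p₀ ∈ {p : ℝ | p ∈ Set.Icc (0:ℝ) 1 ∧
          ∀ H' ⊆ cycleEdges (N+3), H'.Nonempty →
            (copyCount (N+3) H' (cycleEdges (N+3)) : ℝ) / 2 ≤
              erExp (N+3) p (fun G => (copyCount (N+3) H' G : ℝ))} := by
        refine ⟨⟨by positivity, ?_⟩, ?_⟩
        · rw [hp₀, div_le_one hx0]
          linarith
        · intro H' hH' hne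
          rw [erExp_copyCount]
          have horb1 := card_perm_filter_subset (N+3) H' (cycleEdges (N+3)) hcycKn
          have horb2 := card_perm_filter_subset (N+3) H' (Kn (N+3)) (Finset.Subset.refl _)
          have hKnfull : (univ.filter (fun σ : Equiv.Perm (Fin (N+3)) =>
              H'.image (Sym2.map ⇑σ) ⊆ Kn (N+3))) = univ := by
            apply filter_true_of_mem
            intro σ _
            exact image_map_subset_Kn (N+3) (hH'.trans hcycKn) σ
          rw [hKnfull, card_univ, Fintype.card_perm, Fintype.card_fin] at horb2
          have hstabpos : 0 < (univ.filter (fun σ : Equiv.Perm (Fin (N+3)) =>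
              H'.image (Sym2.map ⇑σ) = H')).card := by
            apply card_pos.mpr
            exact ⟨1, mem_filter.mpr ⟨mem_univ _, by simp [Sym2.map_id]⟩⟩
          have hcnt := good_card_bound N H' hH' hne
          have hnat : (copyCount (N+3) H' (cycleEdges (N+3)) * (N+3)^H'.card)
              * (univ.filter (fun σ : Equiv.Perm (Fin (N+3)) =>
                  H'.image (Sym2.map ⇑σ) = H')).card
              ≤ (2 * 162^H'.card * copyCount (N+3) H' (Kn (N+3)))
              * (univ.filter (fun σ : Equiv.Perm (Fin (N+3)) =>
                  H'.image (Sym2.map ⇑σ) = H')).card := by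
            calc (copyCount (N+3) H' (cycleEdges (N+3)) * (N+3)^H'.card)
                * (univ.filter (fun σ : Equiv.Perm (Fin (N+3)) =>
                    H'.image (Sym2.map ⇑σ) = H')).card
                = ((univ.filter (fun σ : Equiv.Perm (Fin (N+3)) =>
                    H'.image (Sym2.map ⇑σ) ⊆ cycleEdges (N+3))).card) * (N+3)^H'.card := by
                  rw [horb1]; ring
            _ ≤ 2 * 162^H'.card * (N+3).factorial := hcnt
            _ = (2 * 162^H'.card * copyCount (N+3) H' (Kn (N+3)))
                * (univ.filter (fun σ : Equiv.Perm (Fin (N+3)) =>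
                    H'.image (Sym2.map ⇑σ) = H')).card := by
                  rw [horb2]; ring
          have hnat2 : copyCount (N+3) H' (cycleEdges (N+3)) * (N+3)^H'.card
              ≤ 2 * 162^H'.card * copyCount (N+3) H' (Kn (N+3)) :=
            Nat.le_of_mul_le_mul_right hnat hstabpos
          have hreal : (copyCount (N+3) H' (cycleEdges (N+3)) : ℝ) * ((N+3:ℕ):ℝ)^H'.card
              ≤ 2 * 162^H'.card * (copyCount (N+3) H' (Kn (N+3)) : ℝ) := by
            exact_mod_cast hnat2
          rw [hp₀, div_pow, div_le_iff₀ (show (0:ℝ) < 2 by norm_num)]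
          rw [show (copyCount (N+3) H' (Kn (N+3)) : ℝ)
              * ((162:ℝ)^H'.card / ((N+3:ℕ):ℝ)^H'.card) * 2
              = (2 * 162^H'.card * (copyCount (N+3) H' (Kn (N+3)) : ℝ))
                / ((N+3:ℕ):ℝ)^H'.card from by field_simp]
          rw [le_div_iff₀ (by positivity)]
          exact hreal
      unfold ptE
      exact csInf_le hbdd hp₀mem
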